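/- Every complete simple game whose desirability classes have sizes (n_1, 1) — i.e., n_1 equivalent strong agents and one weakest agent — is weighted; in fact it equals the game with weighted representation [m_0; 1,…,1, 0] for some 1 ≤ m_0 ≤ n_1, i.e., S is winning iff S contains at least m_0 of the first n_1 agents. -/
import Mathlib


def SimpleGame (n : ℕ) (W : Finset (Fin n) → Prop) : Prop :=
  ¬ W ∅ ∧ W Finset.univ ∧ ∀ ⦃S T : Finset (Fin n)⦄, S ⊆ T → W S → W T

def Desir {n : ℕ} (W : Finset (Fin n) → Prop) (i j : Fin n) : Prop :=
  ∀ S : Finset (Fin n), j ∈ S → i ∉ S → W S → W (insert i (S.erase j))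

def DesirTotalPreorder {n : ℕ} (W : Finset (Fin n) → Prop) : Prop :=
  (∀ i, Desir W i i) ∧ (∀ i j, Desir W i j ∨ Desir W j i) ∧
    (∀ i j k, Desir W i j → Desir W j k → Desir W i k)

def IsWeighted {n : ℕ} (W : Finset (Fin n) → Prop) : Prop :=
  ∃ q : ℝ, 0 < q ∧ ∃ w : Fin n → ℝ, (∀ i, 0 ≤ w i) ∧
    ∀ S : Finset (Fin n), W S ↔ q ≤ ∑ i ∈ S, w i

/-- Swap lemma: if all the elements on which `S` and `T` differ are "strong"
(in particular the weakest agent `z` belongs to both or neither) and `S.card ≤ T.card`,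
then `W S → W T`. -/
lemma swap_lemma {n₁ : ℕ} (W : Finset (Fin (n₁ + 1)) → Prop)
    (hsg : SimpleGame (n₁ + 1) W)
    (hclass : ∀ i j : Fin (n₁ + 1), (Desir W i j ∧ Desir W j i) ↔
      (((i : ℕ) < n₁) ↔ ((j : ℕ) < n₁))) :
    ∀ d (S T : Finset (Fin (n₁ + 1))), (S \ T).card = d →
      (Fin.last n₁ ∈ S ↔ Fin.last n₁ ∈ T) → S.card ≤ T.card → W S → W T := by
  intro d
  induction d with
  | zero =>
    intro S T hd _ _ hW
    have hsub : S ⊆ T := by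
      rw [← Finset.sdiff_eq_empty_iff_subset]
      exact Finset.card_eq_zero.mp hd
    exact hsg.2.2 hsub hW
  | succ d ih =>
    intro S T hd hz hcard hW
    obtain ⟨i, hi⟩ : (S \ T).Nonempty := by
      rw [← Finset.card_pos, hd]; omega
    have hiS : i ∈ S := (Finset.mem_sdiff.mp hi).1
    have hiT : i ∉ T := (Finset.mem_sdiff.mp hi).2
    -- T \ S is at least as large as S \ T
    have h1 : (S \ T).card + (S ∩ T).card = S.card := Finset.card_sdiff_add_card_inter S T
    have h2 : (T \ S).card + (T ∩ S).card = T.card := Finset.card_sdiff_add_card_inter T S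
    have hint : (S ∩ T).card = (T ∩ S).card := by rw [Finset.inter_comm]
    obtain ⟨j, hj⟩ : (T \ S).Nonempty := by
      rw [← Finset.card_pos]; omega
    have hjT : j ∈ T := (Finset.mem_sdiff.mp hj).1
    have hjS : j ∉ S := (Finset.mem_sdiff.mp hj).2
    have hine : i ≠ Fin.last n₁ := by
      intro h; subst h
      exact hiT (hz.mp hiS)
    have hjne : j ≠ Fin.last n₁ := by
      intro h; subst h
      exact hjS (hz.mpr hjT)
    have histrong : (i : ℕ) < n₁ := Fin.val_lt_last hine
    have hjstrong : (j : ℕ) < n₁ := Fin.val_lt_last hjne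
    have hdes : Desir W j i := ((hclass j i).mpr (by simp [histrong, hjstrong])).1
    have hW' : W (insert j (S.erase i)) := hdes S hiS hjS hW
    set S' := insert j (S.erase i) with hS'
    have hcard' : S'.card = S.card := by
      rw [hS', Finset.card_insert_of_notMem (fun h => hjS (Finset.mem_of_mem_erase h)),
        Finset.card_erase_of_mem hiS]
      have : 1 ≤ S.card := Finset.card_pos.mpr ⟨i, hiS⟩
      omega
    have hsd : S' \ T = (S \ T).erase i := by
      ext x
      simp only [hS', Finset.mem_sdiff, Finset.mem_insert, Finset.mem_erase]
      constructor
      · rintro ⟨hx1 | hx1, hx2⟩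
        · exact absurd hjT (hx1 ▸ hx2)
        · exact ⟨hx1.1, hx1.2, hx2⟩
      · rintro ⟨hx1, hx2, hx3⟩
        exact ⟨Or.inr ⟨hx1, hx2⟩, hx3⟩
    have hd' : (S' \ T).card = d := by
      rw [hsd, Finset.card_erase_of_mem hi, hd]
      omega
    have hz' : Fin.last n₁ ∈ S' ↔ Fin.last n₁ ∈ T := by
      rw [hS']
      simp only [Finset.mem_insert, Finset.mem_erase]
      constructor
      · rintro (h | h)
        · exact absurd h.symm hjne
        · exact hz.mp h.2
      · intro h
        exact Or.inr ⟨Ne.symm hine, hz.mpr h⟩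
    exact ih S' T hd' hz' (hcard' ▸ hcard) hW'

theorem star_one_family_weighted (n₁ : ℕ) (hn : 1 ≤ n₁)
    (W : Finset (Fin (n₁ + 1)) → Prop) (hsg : SimpleGame (n₁ + 1) W)
    (hc : DesirTotalPreorder W)
    (hclass : ∀ i j : Fin (n₁ + 1), (Desir W i j ∧ Desir W j i) ↔
      (((i : ℕ) < n₁) ↔ ((j : ℕ) < n₁)))
    (hord : ∀ i : Fin (n₁ + 1), Desir W i (Fin.last n₁)) :
    IsWeighted W ∧
      ∃ m₀ : ℕ, 1 ≤ m₀ ∧ m₀ ≤ n₁ ∧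
        ∀ S : Finset (Fin (n₁ + 1)), W S ↔
          m₀ ≤ (S.filter (fun i : Fin (n₁ + 1) => (i : ℕ) < n₁)).card := by
  classical
  set z := Fin.last n₁ with hzdef
  have hswap := swap_lemma W hsg hclass
  -- canonical sets
  have Fcard : ∀ k, k ≤ n₁ →
      (Finset.univ.filter (fun i : Fin (n₁ + 1) => (i : ℕ) < k)).card = k := by
    intro k hk
    have : (Finset.univ.filter (fun i : Fin (n₁ + 1) => (i : ℕ) < k)) =
        Finset.Iio (⟨k, by omega⟩ : Fin (n₁ + 1)) := by
      ext x
      simp [Finset.mem_Iio, Fin.lt_def]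
    rw [this, Fin.card_Iio]
  set F : ℕ → Finset (Fin (n₁ + 1)) :=
    fun k => Finset.univ.filter (fun i : Fin (n₁ + 1) => (i : ℕ) < k) with hF
  have hzF : ∀ k, k ≤ n₁ → z ∉ F k := by
    intro k hk
    simp only [hF, Finset.mem_filter, hzdef, Fin.val_last]
    omega
  -- the strong agent 0
  have h0strong : ((0 : Fin (n₁ + 1)) : ℕ) < n₁ := by
    simp [Fin.val_zero]; omega
  have hzweak : ¬ ((z : ℕ) < n₁) := by simp [hzdef]
  -- z is strictly less desirable than 0 : obtain the key witness
  have hnd : ¬ Desir W z 0 := by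
    intro h
    have := (hclass z 0).mp ⟨h, hord 0⟩
    rw [this] at hzweak
    exact hzweak h0strong
  unfold Desir at hnd
  push_neg at hnd
  obtain ⟨T, h0T, hzT, hWT, hWT'⟩ := hnd
  -- there exists a winning set avoiding z, hence W (F n₁)
  have hTsub : T ⊆ F n₁ := by
    intro x hx
    simp only [hF, Finset.mem_filter, Finset.mem_univ, true_and]
    have : x ≠ z := by rintro rfl; exact hzT hx
    exact Fin.val_lt_last this
  have hWFn : W (F n₁) := hsg.2.2 hTsub hWT
  -- minimal winning level
  have hex : ∃ k, W (F k) := ⟨n₁, hWFn⟩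
  set m₀ := Nat.find hex with hm₀
  have hWFm : W (F m₀) := Nat.find_spec hex
  have hm₀n : m₀ ≤ n₁ := Nat.find_le hWFn
  have hm₀1 : 1 ≤ m₀ := by
    rcases Nat.eq_zero_or_pos m₀ with h | h
    · exfalso
      apply hsg.1
      have : F 0 = ∅ := by
        ext x; simp [hF]
      rw [← this, ← h]
      exact hWFm
    · exact h
  -- key: a winning set not containing z has card ≥ m₀
  -- main characterization
  have main : ∀ S : Finset (Fin (n₁ + 1)), W S ↔
      m₀ ≤ (S.filter (fun i : Fin (n₁ + 1) => (i : ℕ) < n₁)).card := by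
    intro S
    set Ss := S.filter (fun i : Fin (n₁ + 1) => (i : ℕ) < n₁) with hSs
    have hzSs : z ∉ Ss := by
      simp only [hSs, Finset.mem_filter]
      tauto
    have hSssub : Ss ⊆ S := Finset.filter_subset _ _
    constructor
    · intro hW
      by_contra hlt
      push_neg at hlt
      -- card of T: T = Ss of itself since z ∉ T
      have hTeq : T.filter (fun i : Fin (n₁ + 1) => (i : ℕ) < n₁) = T := by
        apply Finset.filter_true_of_mem
        intro x hx
        refine Fin.val_lt_last ?_
        rintro rfl; exact hzT hx
      have hTn : T.card ≤ n₁ := by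
        have h := Finset.card_le_card hTsub
        rwa [Fcard n₁ le_rfl] at h
      have hTcard : m₀ ≤ T.card := by
        by_contra hT
        push_neg at hT
        -- W T with z ∉ T and T.card < m₀ : swap to F T.card, contradiction
        have hzmem : (z ∈ T ↔ z ∈ F T.card) :=
          ⟨fun h => absurd h hzT, fun h => absurd h (hzF T.card hTn)⟩
        have hcle : T.card ≤ (F T.card).card := by rw [Fcard T.card hTn]
        have hwin : W (F T.card) := hswap (T \ F T.card).card T (F T.card) rfl hzmem hcle hWT
        have := Nat.find_le (h := hex) hwin
        omega
      by_cases hzS : z ∈ S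
      · -- use the losing set insert z (T.erase 0)
        set L := insert z (T.erase 0) with hL
        have hzL : z ∈ L := Finset.mem_insert_self _ _
        have hLcard : L.card = T.card := by
          rw [hL, Finset.card_insert_of_notMem
            (fun h => hzT (Finset.mem_of_mem_erase h)),
            Finset.card_erase_of_mem h0T]
          have : 1 ≤ T.card := Finset.card_pos.mpr ⟨_, h0T⟩
          omega
        -- S = Ss ∪ {z}, card S = Ss.card + 1
        have hSeq : S = insert z Ss := by
          ext x
          simp only [Finset.mem_insert, hSs, Finset.mem_filter]
          constructor
          · intro hx
            by_cases hxz : x = z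
            · exact Or.inl hxz
            · exact Or.inr ⟨hx, Fin.val_lt_last hxz⟩
          · rintro (rfl | hx)
            · exact hzS
            · exact hx.1
        have hScard : S.card = Ss.card + 1 := by
          rw [hSeq, Finset.card_insert_of_notMem hzSs]
        have : W L := hswap (S \ L).card S L rfl
          ⟨fun _ => hzL, fun _ => hzS⟩ (by omega) hW
        exact hWT' this
      · -- z ∉ S : S = Ss, swap to F Ss.card
        have hSeq : Ss = S := by
          apply Finset.filter_true_of_mem
          intro x hx
          refine Fin.val_lt_last ?_
          rintro rfl; exact hzS hx
        have hSn : Ss.card ≤ n₁ := by omega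
        have hzmem : (z ∈ S ↔ z ∈ F Ss.card) :=
          ⟨fun h => absurd h hzS, fun h => absurd h (hzF Ss.card hSn)⟩
        have hcle : S.card ≤ (F Ss.card).card := by
          rw [Fcard Ss.card hSn, hSeq]
        have hwin : W (F Ss.card) := hswap (S \ F Ss.card).card S (F Ss.card) rfl hzmem hcle hW
        have := Nat.find_le (h := hex) hwin
        omega
    · intro hle
      -- F m₀ swaps into Ss (both avoid z, |F m₀| = m₀ ≤ |Ss|), then monotone
      have hWSs : W Ss := by
        refine hswap (F m₀ \ Ss).card (F m₀) Ss rfl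
          ⟨fun h => absurd h (hzF m₀ hm₀n), fun h => absurd h hzSs⟩ ?_ hWFm
        rw [Fcard m₀ hm₀n]; exact hle
      exact hsg.2.2 hSssub hWSs
  refine ⟨⟨(m₀ : ℝ), by exact_mod_cast hm₀1, fun i => if (i : ℕ) < n₁ then 1 else 0,
    fun i => by positivity, ?_⟩, m₀, hm₀1, hm₀n, main⟩
  intro S
  rw [main S]
  have hsum : (∑ i ∈ S, (fun i : Fin (n₁ + 1) => if ((i : ℕ) < n₁) then (1 : ℝ) else 0) i)
      = ((S.filter (fun i : Fin (n₁ + 1) => (i : ℕ) < n₁)).card : ℝ) := by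
    simp [Finset.sum_boole]
  rw [hsum]
  exact_mod_cast Iff.rfl
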